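/- (Upper bound on the worst-case cost) Under the hypotheses of Lemma 3.1 (P ≻ 0 with Ā'P + PĀ + C'Q̄C + PGP ≺ 0, x₀'Px₀ < δ, and Ā+GP Hurwitz), the worst-case cost satisfies J(d̄) = x₀'Px₀ − x₀'Yx₀ < δ, where Y ≻ 0 is the unique solution of the Lyapunov equation (Ā+GP)'Y + Y(Ā+GP) = −Q† with Q† := −(Ā'P + PĀ + C'Q̄C + PGP) ≻ 0. -/

import Mathlib

open Matrix MeasureTheory

/-- `A` is Hurwitz (stable): every eigenvalue of `A` has negative real part. -/
def IsHurwitz {n : ℕ} (A : Matrix (Fin n) (Fin n) ℝ) : Prop :=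
  ∀ μ ∈ spectrum ℂ (A.map (algebraMap ℝ ℂ)), μ.re < 0

section Stmt10AuxSection

open Polynomial Filter

attribute [local instance] Matrix.linftyOpNormedRing Matrix.linftyOpNormedAlgebra

namespace Stmt10Aux

variable {n : ℕ}

/-- mulVec as a continuous linear map in the matrix argument. -/
noncomputable def mulVecCLM (𝕜 : Type*) [NontriviallyNormedField 𝕜] [CompleteSpace 𝕜]
    (v : Fin n → 𝕜) : Matrix (Fin n) (Fin n) 𝕜 →L[𝕜] (Fin n → 𝕜) :=
  LinearMap.toContinuousLinearMap
    { toFun := fun M => M *ᵥ v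
      map_add' := fun M N => Matrix.add_mulVec M N v
      map_smul' := fun c M => Matrix.smul_mulVec c M v }

@[simp] lemma mulVecCLM_apply {𝕜 : Type*} [NontriviallyNormedField 𝕜] [CompleteSpace 𝕜]
    (v : Fin n → 𝕜) (M : Matrix (Fin n) (Fin n) 𝕜) : mulVecCLM 𝕜 v M = M *ᵥ v := rfl

lemma exists_eigenvec {B : Matrix (Fin n) (Fin n) ℂ} {μ : ℂ}
    (h : μ ∈ spectrum ℂ B) : ∃ v : Fin n → ℂ, v ≠ 0 ∧ B *ᵥ v = μ • v := by
  rw [spectrum.mem_iff] at h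
  have hdet : (μ • (1 : Matrix (Fin n) (Fin n) ℂ) - B).det = 0 := by
    by_contra hd
    exact h (by simpa [Matrix.isUnit_iff_isUnit_det, isUnit_iff_ne_zero,
      Algebra.algebraMap_eq_smul_one] using hd)
  obtain ⟨v, hv0, hv⟩ := (Matrix.exists_mulVec_eq_zero_iff).2 hdet
  refine ⟨v, hv0, ?_⟩
  rw [Matrix.sub_mulVec, sub_eq_zero] at hv
  simpa [Matrix.smul_mulVec, Matrix.one_mulVec] using hv.symm

lemma exp_mulVec_eigen {B : Matrix (Fin n) (Fin n) ℂ} {μ : ℂ} {v : Fin n → ℂ}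
    (hv : B *ᵥ v = μ • v) :
    NormedSpace.exp B *ᵥ v = Complex.exp μ • v := by
  have hpow : ∀ k : ℕ, (B ^ k) *ᵥ v = (μ ^ k) • v := by
    intro k
    induction k with
    | zero => simp [Matrix.one_mulVec]
    | succ k ih =>
      rw [pow_succ', ← Matrix.mulVec_mulVec, ih, Matrix.mulVec_smul, hv,
        smul_smul, ← pow_succ]
  have h1 := (NormedSpace.exp_series_hasSum_exp' (𝕂 := ℂ) B).mapL (mulVecCLM ℂ v)
  have h2 := (NormedSpace.exp_series_hasSum_exp' (𝕂 := ℂ) μ).smul_const v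
  rw [Complex.exp_eq_exp_ℂ]
  refine HasSum.unique ?_ h2
  convert h1 using 2 with k
  simp [hpow k, smul_smul]
  rfl

lemma spectrum_exp_subset (hn : 0 < n) (B : Matrix (Fin n) (Fin n) ℂ) :
    spectrum ℂ (NormedSpace.exp B) ⊆ Complex.exp '' spectrum ℂ B := by
  haveI : NeZero n := ⟨hn.ne'⟩
  -- the exponential lies in the (closed, finite-dimensional) subalgebra generated by `B`
  have hmem : NormedSpace.exp B ∈ Algebra.adjoin ℂ {B} := by
    have hclosed : IsClosed ((Subalgebra.toSubmodule (Algebra.adjoin ℂ {B}) :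
        Submodule ℂ (Matrix (Fin n) (Fin n) ℂ)) : Set (Matrix (Fin n) (Fin n) ℂ)) :=
      Submodule.closed_of_finiteDimensional _
    have hs := (NormedSpace.exp_series_hasSum_exp' (𝕂 := ℂ) B).tendsto_sum_nat
    have hin : ∀ N : ℕ, (∑ k ∈ Finset.range N, ((k.factorial : ℂ))⁻¹ • B ^ k) ∈
        Algebra.adjoin ℂ {B} := fun N =>
      Subalgebra.sum_mem _ fun k _ => Subalgebra.smul_mem _
        (pow_mem (Algebra.self_mem_adjoin_singleton ℂ B) k) _
    exact hclosed.mem_of_tendsto hs (Filter.Eventually.of_forall hin)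
  rw [Algebra.adjoin_singleton_eq_range_aeval] at hmem
  obtain ⟨q, hq⟩ := hmem
  replace hq : (aeval B) q = NormedSpace.exp B := hq
  have hne : (spectrum ℂ B).Nonempty :=
    spectrum.nonempty_of_isAlgClosed_of_finiteDimensional ℂ B
  have hmap := spectrum.map_polynomial_aeval_of_nonempty B q hne
  rw [hq] at hmap
  intro μ hμ
  rw [hmap] at hμ
  obtain ⟨lam, hlam, rfl⟩ := hμ
  refine ⟨lam, hlam, ?_⟩
  obtain ⟨v, hv0, hv⟩ := exists_eigenvec hlam
  have hegv : Module.End.HasEigenvector (Matrix.toLinAlgEquiv' B : Module.End ℂ (Fin n → ℂ)) lam v :=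
    ⟨Module.End.mem_eigenspace_iff.2 (by simpa [Matrix.toLinAlgEquiv'_apply] using hv), hv0⟩
  have h1 : (aeval ((Matrix.toLinAlgEquiv' : Matrix (Fin n) (Fin n) ℂ ≃ₐ[ℂ] _) B)) q v =
      q.eval lam • v := Module.End.aeval_apply_of_hasEigenvector hegv
  rw [Polynomial.aeval_algHom_apply (Matrix.toLinAlgEquiv' :
      Matrix (Fin n) (Fin n) ℂ ≃ₐ[ℂ] _) B q, hq, Matrix.toLinAlgEquiv'_apply,
    exp_mulVec_eigen hv] at h1
  exact (smul_left_injective ℂ hv0 h1)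


lemma exp_decay (B : Matrix (Fin n) (Fin n) ℂ)
    (hB : ∀ μ ∈ spectrum ℂ B, μ.re < 0) :
    ∃ c ε : ℝ, 0 < c ∧ 0 < ε ∧ ∀ t : ℝ, 0 ≤ t →
      ‖NormedSpace.exp (t • B)‖ ≤ c * Real.exp (-(ε * t)) := by
  rcases Nat.eq_zero_or_pos n with rfl | hn
  · haveI : Subsingleton (Matrix (Fin 0) (Fin 0) ℂ) :=
      ⟨fun a b => by ext i; exact absurd i.2 (Nat.not_lt_zero _)⟩
    refine ⟨1, 1, one_pos, one_pos, fun t ht => ?_⟩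
    rw [Subsingleton.elim (NormedSpace.exp (t • B)) 0, norm_zero]
    positivity
  haveI : NeZero n := ⟨hn.ne'⟩
  -- maximum of the real part on the spectrum
  have hne : (spectrum ℂ B).Nonempty :=
    spectrum.nonempty_of_isAlgClosed_of_finiteDimensional ℂ B
  obtain ⟨lam0, hlam0, hmax⟩ := (spectrum.isCompact B).exists_isMaxOn hne
    Complex.continuous_re.continuousOn
  set a : ℝ := Real.exp lam0.re with ha_def
  have ha0 : 0 < a := Real.exp_pos _
  have ha1 : a < 1 := Real.exp_lt_one_iff.2 (hB lam0 hlam0)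
  set a' : ℝ := (1 + a) / 2 with ha'_def
  have ha'0 : 0 < a' := by positivity
  have haa' : a < a' := by simp only [ha'_def]; linarith
  have ha'1 : a' < 1 := by simp only [ha'_def]; linarith
  set T := NormedSpace.exp B with hT_def
  -- spectral radius bound
  have hsr : spectralRadius ℂ T ≤ ENNReal.ofReal a := by
    rw [spectralRadius]
    refine iSup₂_le fun μ hμ => ?_
    obtain ⟨lam, hlam, rfl⟩ := spectrum_exp_subset hn B hμ
    have h1 : ‖Complex.exp lam‖ ≤ a := by
      rw [Complex.norm_exp]
      exact Real.exp_le_exp.2 (hmax hlam)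
    rw [show ((‖Complex.exp lam‖₊ : NNReal) : ENNReal) = ENNReal.ofReal ‖Complex.exp lam‖ from (ofReal_norm _).symm]
    exact ENNReal.ofReal_le_ofReal h1
  have hlt : spectralRadius ℂ T < ENNReal.ofReal a' :=
    lt_of_le_of_lt hsr (by
      rw [ENNReal.ofReal_lt_ofReal_iff ha'0]; exact haa')
  -- Gelfand's formula: find m ≥ 1 with ‖T ^ m‖ ≤ a' ^ m
  have hgel := spectrum.pow_nnnorm_pow_one_div_tendsto_nhds_spectralRadius T
  obtain ⟨m, hm⟩ := ((hgel.eventually_lt_const hlt).and (eventually_ge_atTop 1)).exists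
  obtain ⟨hmlt, hm1⟩ := hm
  have hm0 : (0:ℝ) < m := by exact_mod_cast hm1
  have hTm : ‖T ^ m‖ ≤ a' ^ m := by
    have h2 : ((‖T ^ m‖₊ : ENNReal) ^ ((1:ℝ) / m)) ^ (m:ℝ) ≤
        (ENNReal.ofReal a') ^ (m:ℝ) :=
      ENNReal.rpow_le_rpow hmlt.le (by positivity)
    rw [← ENNReal.rpow_mul, one_div_mul_cancel hm0.ne', ENNReal.rpow_one,
      ENNReal.ofReal_rpow_of_pos ha'0, Real.rpow_natCast] at h2
    rw [← ENNReal.ofReal_le_ofReal_iff (by positivity), show ENNReal.ofReal ‖T ^ m‖ = ((‖T ^ m‖₊ : NNReal) : ENNReal) from ofReal_norm _]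
    exact h2
  -- bound on a compact time interval
  obtain ⟨C, hC⟩ := (isCompact_Icc (a := (0:ℝ)) (b := (m:ℝ))).exists_bound_of_continuousOn
    ((NormedSpace.exp_continuous.comp (continuous_id.smul continuous_const)).continuousOn
      (f := fun s : ℝ => NormedSpace.exp (s • B)))
  set C' := max C 1 with hC'_def
  have hC'1 : (1:ℝ) ≤ C' := le_max_right _ _
  have hC'0 : (0:ℝ) < C' := lt_of_lt_of_le one_pos hC'1
  set ε : ℝ := -Real.log a' with hε_def
  have hε0 : 0 < ε := by
    rw [hε_def, neg_pos]; exact Real.log_neg ha'0 ha'1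
  refine ⟨C' * Real.exp (ε * m), ε, by positivity, hε0, fun t ht => ?_⟩
  set k : ℕ := ⌊t / m⌋₊ with hk_def
  set s : ℝ := t - k * m with hs_def
  have hs0 : 0 ≤ s := by
    rw [hs_def, sub_nonneg]
    calc (k:ℝ) * m ≤ (t / m) * m := by
          exact mul_le_mul_of_nonneg_right (Nat.floor_le (by positivity)) hm0.le
      _ = t := div_mul_cancel₀ t hm0.ne'
  have hsm : s ≤ m := by
    rw [hs_def, sub_le_iff_le_add]
    have := Nat.lt_floor_add_one (t / m)
    calc t = (t / m) * m := (div_mul_cancel₀ t hm0.ne').symm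
      _ ≤ ((k:ℝ) + 1) * m := mul_le_mul_of_nonneg_right this.le hm0.le
      _ = m + k * m := by ring
  -- decompose the exponential
  have hsplit : NormedSpace.exp (t • B) =
      NormedSpace.exp (s • B) * (NormedSpace.exp ((m:ℝ) • B)) ^ k := by
    have h3 : t • B = s • B + ((k:ℝ) * m) • B := by
      rw [← add_smul]; congr 1; rw [hs_def]; ring
    have hcomm : Commute (s • B) (((k:ℝ) * m) • B) :=
      ((Commute.refl B).smul_right _).smul_left _
    rw [h3, Matrix.exp_add_of_commute _ _ hcomm]
    congr 1
    rw [← smul_smul, Nat.cast_smul_eq_nsmul ℝ k ((m:ℝ) • B), Matrix.exp_nsmul]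
  have hTmB : NormedSpace.exp ((m:ℝ) • B) = T ^ m := by
    rw [Nat.cast_smul_eq_nsmul, Matrix.exp_nsmul, hT_def]
  have hnorm1 : ‖NormedSpace.exp (s • B)‖ ≤ C' :=
    le_trans (hC s ⟨hs0, hsm⟩) (le_max_left _ _)
  have hpowbound : ‖(NormedSpace.exp ((m:ℝ) • B)) ^ k‖ ≤ (a' ^ m) ^ k := by
    haveI : Nonempty (Fin n) := Fin.pos_iff_nonempty.1 hn
    rcases Nat.eq_zero_or_pos k with hk0 | hk
    · rw [hk0]; simp only [pow_zero, norm_one, le_refl]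
    · calc ‖(NormedSpace.exp ((m:ℝ) • B)) ^ k‖ ≤ ‖NormedSpace.exp ((m:ℝ) • B)‖ ^ k :=
            norm_pow_le' _ hk
        _ ≤ (a' ^ m) ^ k := by
            apply pow_le_pow_left₀ (norm_nonneg _)
            rw [hTmB]; exact hTm
  -- final estimate
  have hfin : C' * (a' ^ m) ^ k ≤ C' * Real.exp (ε * m) * Real.exp (-(ε * t)) := by
    have h4 : (a' ^ m) ^ k = Real.exp (-(ε * (m * k))) := by
      rw [← pow_mul]
      have : a' = Real.exp (-ε) := by
        rw [hε_def, neg_neg, Real.exp_log ha'0]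
      rw [this, ← Real.exp_nat_mul]
      congr 1
      push_cast
      ring
    have h5 : -(ε * (m * k)) ≤ ε * m + -(ε * t) := by
      have h6 : t ≤ m + m * k := by
        have := hsm
        rw [hs_def] at this
        nlinarith
      nlinarith
    calc C' * (a' ^ m) ^ k = C' * Real.exp (-(ε * (m * k))) := by rw [h4]
      _ ≤ C' * Real.exp (ε * m + -(ε * t)) :=
          mul_le_mul_of_nonneg_left (Real.exp_le_exp.2 h5) hC'0.le
      _ = C' * Real.exp (ε * m) * Real.exp (-(ε * t)) := by
          rw [Real.exp_add]; ring
  calc ‖NormedSpace.exp (t • B)‖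
      = ‖NormedSpace.exp (s • B) * (NormedSpace.exp ((m:ℝ) • B)) ^ k‖ := by
        rw [hsplit]
    _ ≤ ‖NormedSpace.exp (s • B)‖ * ‖(NormedSpace.exp ((m:ℝ) • B)) ^ k‖ :=
        norm_mul_le _ _
    _ ≤ C' * (a' ^ m) ^ k :=
        mul_le_mul hnorm1 hpowbound (norm_nonneg _) hC'0.le
    _ ≤ C' * Real.exp (ε * m) * Real.exp (-(ε * t)) := hfin


lemma norm_complexify (w : Fin n → ℝ) : ‖(fun i => (w i : ℂ))‖ = ‖w‖ := by
  rcases Nat.eq_zero_or_pos n with rfl | hn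
  · simp [Pi.norm_def]
  · rw [Pi.norm_def, Pi.norm_def]
    congr 1
    exact Finset.sup_congr rfl fun i _ => Complex.nnnorm_real (w i)

lemma exp_map_complex (A : Matrix (Fin n) (Fin n) ℝ) (t : ℝ) :
    (NormedSpace.exp (t • A)).map (algebraMap ℝ ℂ) =
      NormedSpace.exp (t • A.map (algebraMap ℝ ℂ)) := by
  have hcont : Continuous ((algebraMap ℝ ℂ).mapMatrix :
      Matrix (Fin n) (Fin n) ℝ →+* Matrix (Fin n) (Fin n) ℂ) := by
    have : ⇑((algebraMap ℝ ℂ).mapMatrix : Matrix (Fin n) (Fin n) ℝ →+*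
        Matrix (Fin n) (Fin n) ℂ) = fun M : Matrix (Fin n) (Fin n) ℝ =>
        M.map (algebraMap ℝ ℂ) := funext fun M => RingHom.mapMatrix_apply _ M
    rw [this]
    exact continuous_id.matrix_map Complex.continuous_ofReal
  have h := NormedSpace.map_exp ((algebraMap ℝ ℂ).mapMatrix) hcont (t • A)
  rw [RingHom.mapMatrix_apply, RingHom.mapMatrix_apply] at h
  refine h.trans (congrArg _ ?_)
  ext i j
  simp [Matrix.map_apply, Complex.real_smul]

lemma vec_decay (A : Matrix (Fin n) (Fin n) ℝ) (hA : IsHurwitz A) :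
    ∃ c ε : ℝ, 0 < c ∧ 0 < ε ∧ ∀ (v : Fin n → ℝ) (t : ℝ), 0 ≤ t →
      ‖NormedSpace.exp (t • A) *ᵥ v‖ ≤ c * ‖v‖ * Real.exp (-(ε * t)) := by
  obtain ⟨c, ε, hc, hε, hbd⟩ := exp_decay (A.map (algebraMap ℝ ℂ)) hA
  refine ⟨c, ε, hc, hε, fun v t ht => ?_⟩
  set B := A.map (algebraMap ℝ ℂ) with hB
  have hmv : NormedSpace.exp (t • B) *ᵥ (fun i => (v i : ℂ)) =
      fun i => ((NormedSpace.exp (t • A) *ᵥ v) i : ℂ) := by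
    rw [hB, ← exp_map_complex]
    ext i
    simp only [Matrix.mulVec, dotProduct, Matrix.map_apply]
    push_cast
    rfl
  calc ‖NormedSpace.exp (t • A) *ᵥ v‖
      = ‖NormedSpace.exp (t • B) *ᵥ (fun i => (v i : ℂ))‖ := by
        rw [hmv, norm_complexify]
    _ ≤ ‖NormedSpace.exp (t • B)‖ * ‖(fun i => (v i : ℂ))‖ :=
        Matrix.linfty_opNorm_mulVec _ _
    _ = ‖NormedSpace.exp (t • B)‖ * ‖v‖ := by rw [norm_complexify]
    _ ≤ c * Real.exp (-(ε * t)) * ‖v‖ :=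
        mul_le_mul_of_nonneg_right (hbd t ht) (norm_nonneg _)
    _ = c * ‖v‖ * Real.exp (-(ε * t)) := by ring


lemma dot_shift (A M : Matrix (Fin n) (Fin n) ℝ) (x : Fin n → ℝ) :
    (A *ᵥ x) ⬝ᵥ (M *ᵥ x) = x ⬝ᵥ ((Aᵀ * M) *ᵥ x) := by
  rw [← Matrix.mulVec_mulVec, dotProduct_mulVec x Aᵀ, Matrix.vecMul_transpose]

lemma dot_shift' {m : ℕ} (C : Matrix (Fin m) (Fin n) ℝ) (x : Fin n → ℝ)
    (w : Fin m → ℝ) : (C *ᵥ x) ⬝ᵥ w = x ⬝ᵥ (Cᵀ *ᵥ w) := by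
  rw [dotProduct_mulVec x Cᵀ w, Matrix.vecMul_transpose]

lemma quad_hasDerivAt (A M : Matrix (Fin n) (Fin n) ℝ) (v : Fin n → ℝ) (t : ℝ) :
    HasDerivAt
      (fun u : ℝ => (NormedSpace.exp (u • A) *ᵥ v) ⬝ᵥ
        (M *ᵥ (NormedSpace.exp (u • A) *ᵥ v)))
      ((NormedSpace.exp (t • A) *ᵥ v) ⬝ᵥ
        ((Aᵀ * M + M * A) *ᵥ (NormedSpace.exp (t • A) *ᵥ v))) t := by
  set x : ℝ → Fin n → ℝ := fun u => NormedSpace.exp (u • A) *ᵥ v with hx_def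
  have hx : HasDerivAt x (A *ᵥ x t) t := by
    have h1 := hasDerivAt_exp_smul_const' (𝕂 := ℝ) A t
    have h2 := ((mulVecCLM ℝ v).hasFDerivAt).comp_hasDerivAt t h1
    exact h2.congr_deriv (show (mulVecCLM ℝ v) (A * NormedSpace.exp (t • A)) = A *ᵥ (NormedSpace.exp (t • A) *ᵥ v) from (Matrix.mulVec_mulVec v A (NormedSpace.exp (t • A))).symm)
  have hxi : ∀ i, HasDerivAt (fun u => x u i) ((A *ᵥ x t) i) t := fun i => by
    have := (ContinuousLinearMap.proj (R := ℝ) (φ := fun _ : Fin n => ℝ)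
      i).hasFDerivAt.comp_hasDerivAt t hx
    simpa [Function.comp_def] using this
  have hsum : HasDerivAt (fun u => ∑ i, x u i * ∑ j, M i j * x u j)
      (∑ i, ((A *ᵥ x t) i * ∑ j, M i j * x t j +
        x t i * ∑ j, M i j * (A *ᵥ x t) j)) t :=
    HasDerivAt.fun_sum fun i _ =>
      (hxi i).mul (HasDerivAt.fun_sum fun j _ => (hxi j).const_mul (M i j))
  have heq : (fun u => x u ⬝ᵥ (M *ᵥ x u)) =
      fun u => ∑ i, x u i * ∑ j, M i j * x u j := by
    funext u; simp [dotProduct, Matrix.mulVec]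
  have hval : (∑ i, ((A *ᵥ x t) i * ∑ j, M i j * x t j +
      x t i * ∑ j, M i j * (A *ᵥ x t) j)) =
      x t ⬝ᵥ ((Aᵀ * M + M * A) *ᵥ x t) := by
    have h3 : (∑ i, ((A *ᵥ x t) i * ∑ j, M i j * x t j +
        x t i * ∑ j, M i j * (A *ᵥ x t) j)) =
        (A *ᵥ x t) ⬝ᵥ (M *ᵥ x t) + x t ⬝ᵥ (M *ᵥ (A *ᵥ x t)) := by
      rw [Finset.sum_add_distrib]
      simp [dotProduct, Matrix.mulVec]
    rw [h3, Matrix.add_mulVec, dotProduct_add, dot_shift]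
    congr 1
    rw [Matrix.mulVec_mulVec]
  rw [show (fun u : ℝ => (NormedSpace.exp (u • A) *ᵥ v) ⬝ᵥ
      (M *ᵥ (NormedSpace.exp (u • A) *ᵥ v))) = fun u => x u ⬝ᵥ (M *ᵥ x u) from rfl,
    heq]
  rw [show (NormedSpace.exp (t • A) *ᵥ v) ⬝ᵥ
      ((Aᵀ * M + M * A) *ᵥ (NormedSpace.exp (t • A) *ᵥ v)) =
      x t ⬝ᵥ ((Aᵀ * M + M * A) *ᵥ x t) from rfl, ← hval]
  exact hsum


lemma abs_dot_le (u w : Fin n → ℝ) : |u ⬝ᵥ w| ≤ n * (‖u‖ * ‖w‖) := by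
  calc |u ⬝ᵥ w| = |∑ i, u i * w i| := rfl
    _ ≤ ∑ i, |u i * w i| := Finset.abs_sum_le_sum_abs _ _
    _ ≤ ∑ _i : Fin n, ‖u‖ * ‖w‖ := Finset.sum_le_sum fun i _ => by
        rw [abs_mul]
        exact mul_le_mul (norm_le_pi_norm u i) (norm_le_pi_norm w i)
          (abs_nonneg _) (norm_nonneg _)
    _ = n * (‖u‖ * ‖w‖) := by simp [Finset.sum_const, nsmul_eq_mul]

lemma cont_x (A : Matrix (Fin n) (Fin n) ℝ) (v : Fin n → ℝ) :
    Continuous fun t : ℝ => NormedSpace.exp (t • A) *ᵥ v :=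
  Continuous.matrix_mulVec
    ((NormedSpace.exp_continuous).comp (continuous_id.smul continuous_const))
    continuous_const

lemma integral_quad (A M : Matrix (Fin n) (Fin n) ℝ) (hA : IsHurwitz A) (v : Fin n → ℝ) :
    IntegrableOn (fun t : ℝ => (NormedSpace.exp (t • A) *ᵥ v) ⬝ᵥ
      ((Aᵀ * M + M * A) *ᵥ (NormedSpace.exp (t • A) *ᵥ v))) (Set.Ioi 0) volume ∧
    ∫ t in Set.Ioi (0:ℝ), (NormedSpace.exp (t • A) *ᵥ v) ⬝ᵥ
      ((Aᵀ * M + M * A) *ᵥ (NormedSpace.exp (t • A) *ᵥ v)) = -(v ⬝ᵥ (M *ᵥ v)) := by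
  obtain ⟨c, ε, hc, hε, hbd⟩ := vec_decay A hA
  set N := Aᵀ * M + M * A with hN_def
  set x : ℝ → Fin n → ℝ := fun t => NormedSpace.exp (t • A) *ᵥ v with hx_def
  -- generic decay bound for quadratic forms along the flow
  have hquadbd : ∀ (M' : Matrix (Fin n) (Fin n) ℝ) (t : ℝ), 0 ≤ t →
      |x t ⬝ᵥ (M' *ᵥ x t)| ≤ (n * ‖M'‖ * (c * ‖v‖)^2) * Real.exp (-(2 * ε) * t) := by
    intro M' t ht
    have h1 : ‖x t‖ ≤ c * ‖v‖ * Real.exp (-(ε * t)) := hbd v t ht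
    have h2 : ‖M' *ᵥ x t‖ ≤ ‖M'‖ * ‖x t‖ := Matrix.linfty_opNorm_mulVec _ _
    have h3 := abs_dot_le (x t) (M' *ᵥ x t)
    have hx0 : 0 ≤ ‖x t‖ := norm_nonneg _
    have hcv : (0:ℝ) ≤ c * ‖v‖ := by positivity
    have h4 : ‖x t‖ * ‖M' *ᵥ x t‖ ≤ ‖M'‖ * (c * ‖v‖ * Real.exp (-(ε * t)))^2 := by
      calc ‖x t‖ * ‖M' *ᵥ x t‖ ≤ ‖x t‖ * (‖M'‖ * ‖x t‖) :=
            mul_le_mul_of_nonneg_left h2 hx0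
        _ = ‖M'‖ * (‖x t‖ * ‖x t‖) := by ring
        _ ≤ ‖M'‖ * ((c * ‖v‖ * Real.exp (-(ε * t))) * (c * ‖v‖ * Real.exp (-(ε * t)))) := by
            apply mul_le_mul_of_nonneg_left _ (norm_nonneg M')
            exact mul_le_mul h1 h1 hx0 (by positivity)
        _ = ‖M'‖ * (c * ‖v‖ * Real.exp (-(ε * t)))^2 := by ring
    calc |x t ⬝ᵥ (M' *ᵥ x t)| ≤ n * (‖x t‖ * ‖M' *ᵥ x t‖) := h3
      _ ≤ n * (‖M'‖ * (c * ‖v‖ * Real.exp (-(ε * t)))^2) :=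
          mul_le_mul_of_nonneg_left h4 (Nat.cast_nonneg n)
      _ = (n * ‖M'‖ * (c * ‖v‖)^2) * Real.exp (-(2 * ε) * t) := by
          rw [mul_pow, ← Real.exp_nat_mul]
          have : (↑(2:ℕ) : ℝ) * -(ε * t) = -(2 * ε) * t := by push_cast; ring
          rw [this]
          ring
  -- continuity of the integrand
  have hcontf : ∀ (M' : Matrix (Fin n) (Fin n) ℝ),
      Continuous fun t => x t ⬝ᵥ (M' *ᵥ x t) := fun M' =>
    (cont_x A v).dotProduct (continuous_const.matrix_mulVec (cont_x A v))
  -- integrability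
  have hint : IntegrableOn (fun t => x t ⬝ᵥ (N *ᵥ x t)) (Set.Ioi 0) volume := by
    have hg : IntegrableOn
        (fun t => (n * ‖N‖ * (c * ‖v‖)^2) * Real.exp (-(2 * ε) * t))
        (Set.Ioi 0) volume :=
      (exp_neg_integrableOn_Ioi 0 (by positivity)).const_mul _
    refine hg.mono' ((hcontf N).aestronglyMeasurable.restrict) ?_
    filter_upwards [MeasureTheory.ae_restrict_mem measurableSet_Ioi] with t ht
    exact (hquadbd N t (le_of_lt ht)).trans (le_refl _)
  -- tendsto zero
  have htend : Filter.Tendsto (fun t => x t ⬝ᵥ (M *ᵥ x t)) Filter.atTop (nhds 0) := by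
    have hg0 : Filter.Tendsto
        (fun t : ℝ => (n * ‖M‖ * (c * ‖v‖)^2) * Real.exp (-(2 * ε) * t))
        Filter.atTop (nhds 0) := by
      have h5 : Filter.Tendsto (fun t : ℝ => -(2 * ε) * t) Filter.atTop Filter.atBot :=
        Filter.Tendsto.const_mul_atTop_of_neg (by linarith) Filter.tendsto_id
      have h6 := Real.tendsto_exp_atBot.comp h5
      have := h6.const_mul (n * ‖M‖ * (c * ‖v‖)^2)
      simpa using this
    refine squeeze_zero_norm' ?_ hg0
    filter_upwards [Filter.eventually_ge_atTop (0:ℝ)] with t ht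
    exact hquadbd M t ht
  -- FTC
  have hderiv : ∀ t ∈ Set.Ioi (0:ℝ), HasDerivAt (fun u => x u ⬝ᵥ (M *ᵥ x u))
      (x t ⬝ᵥ (N *ᵥ x t)) t := fun t _ => quad_hasDerivAt A M v t
  have hcw : ContinuousWithinAt (fun u => x u ⬝ᵥ (M *ᵥ x u)) (Set.Ici 0) 0 :=
    (hcontf M).continuousWithinAt
  have hftc := MeasureTheory.integral_Ioi_of_hasDerivAt_of_tendsto hcw hderiv hint htend
  refine ⟨hint, ?_⟩
  rw [hftc]
  have hx0 : x 0 = v := by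
    rw [hx_def]; simp [NormedSpace.exp_zero, Matrix.one_mulVec]
  rw [hx0, zero_sub]

end Stmt10Aux

end Stmt10AuxSection

open Stmt10Aux

/-- Upper bound on the worst-case cost: under the hypotheses of Lemma 3.1,
`J(d̄) = x₀'Px₀ − x₀'Yx₀ < δ`, where `Y ≻ 0` solves the Lyapunov equation
`(Ā+GP)'Y + Y(Ā+GP) = −Q†` with `Q† = −(Ā'P + PĀ + C'Q̄C + PGP) ≻ 0`. -/
theorem stmt10 {n s q : ℕ}
    (Abar : Matrix (Fin n) (Fin n) ℝ) (C : Matrix (Fin s) (Fin n) ℝ)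
    (Qbar : Matrix (Fin s) (Fin s) ℝ) (hQ : Qbar.PosSemidef)
    (D : Matrix (Fin q) (Fin q) ℝ) (hD : D.PosDef)
    (E : Matrix (Fin n) (Fin q) ℝ)
    (P : Matrix (Fin n) (Fin n) ℝ) (hP : P.PosDef)
    (hLMI : (-(Abarᵀ * P + P * Abar + Cᵀ * Qbar * C + P * (E * D⁻¹ * Eᵀ) * P)).PosDef)
    (δ : ℝ) (x₀ : Fin n → ℝ) (hδ : x₀ ⬝ᵥ (P *ᵥ x₀) < δ)
    (hHur : IsHurwitz (Abar + (E * D⁻¹ * Eᵀ) * P))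
    (Y : Matrix (Fin n) (Fin n) ℝ) (hYsymm : Y.IsSymm)
    (hYeq : (Abar + (E * D⁻¹ * Eᵀ) * P)ᵀ * Y + Y * (Abar + (E * D⁻¹ * Eᵀ) * P) =
      -(-(Abarᵀ * P + P * Abar + Cᵀ * Qbar * C + P * (E * D⁻¹ * Eᵀ) * P)))
    (dbar : ℝ → Fin q → ℝ) (xbar : ℝ → Fin n → ℝ)
    (hxbar : xbar = fun t => (NormedSpace.exp (t • (Abar + (E * D⁻¹ * Eᵀ) * P))) *ᵥ x₀)
    (hdbar : dbar = fun t => (D⁻¹ * Eᵀ * P) *ᵥ xbar t) :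
    Y.PosDef ∧
      (∫ t in Set.Ioi (0:ℝ),
          ((C *ᵥ xbar t) ⬝ᵥ (Qbar *ᵥ (C *ᵥ xbar t)) - dbar t ⬝ᵥ (D *ᵥ dbar t))) =
        x₀ ⬝ᵥ (P *ᵥ x₀) - x₀ ⬝ᵥ (Y *ᵥ x₀) ∧
      x₀ ⬝ᵥ (P *ᵥ x₀) - x₀ ⬝ᵥ (Y *ᵥ x₀) < δ := by
  subst hxbar hdbar
  set G : Matrix (Fin n) (Fin n) ℝ := E * D⁻¹ * Eᵀ with hG_def
  set A : Matrix (Fin n) (Fin n) ℝ := Abar + G * P with hA_def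
  clear_value G A
  -- symmetry facts
  have hPs : Pᵀ = P := by
    have := hP.1.eq; rwa [Matrix.conjTranspose_eq_transpose_of_trivial] at this
  have hDs : Dᵀ = D := by
    have := hD.1.eq; rwa [Matrix.conjTranspose_eq_transpose_of_trivial] at this
  have hDinv_s : D⁻¹ᵀ = D⁻¹ := by rw [Matrix.transpose_nonsing_inv, hDs]
  have hGs : Gᵀ = G := by
    rw [hG_def, Matrix.transpose_mul, Matrix.transpose_mul, Matrix.transpose_transpose,
      hDinv_s, Matrix.mul_assoc]
  have hDdet : IsUnit D.det := hD.det_pos.ne'.isUnit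
  have hDinvD : D⁻¹ * D * D⁻¹ = D⁻¹ := by
    rw [Matrix.nonsing_inv_mul D hDdet, Matrix.one_mul]
  have hYeq' : Aᵀ * Y + Y * A =
      Abarᵀ * P + P * Abar + Cᵀ * Qbar * C + P * G * P := by
    rw [← neg_neg (Abarᵀ * P + P * Abar + Cᵀ * Qbar * C + P * G * P)]
    exact hYeq
  -- Part 1: Y is positive definite
  have hYposdef : Y.PosDef := by
    refine Matrix.PosDef.of_dotProduct_mulVec_pos ?_ ?_
    · rw [Matrix.IsHermitian, Matrix.conjTranspose_eq_transpose_of_trivial]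
      exact hYsymm
    · intro v hv
      obtain ⟨hint, hI⟩ := integral_quad A Y hHur v
      have hx_ne : ∀ t : ℝ, (NormedSpace.exp (t • A) : Matrix (Fin n) (Fin n) ℝ) *ᵥ v ≠ 0 := by
        intro t h0
        apply hv
        have h2 : NormedSpace.exp (-(t • A)) * NormedSpace.exp (t • A) = 1 := by
          rw [← Matrix.exp_add_of_commute _ _ ((Commute.refl (t • A)).neg_left),
            neg_add_cancel, NormedSpace.exp_zero]
        have h1 : NormedSpace.exp (-(t • A)) *ᵥ (NormedSpace.exp (t • A) *ᵥ v) = v := by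
          rw [Matrix.mulVec_mulVec, h2, Matrix.one_mulVec]
        rw [h0, Matrix.mulVec_zero] at h1
        exact h1.symm
      set Qd : Matrix (Fin n) (Fin n) ℝ :=
        -(Abarᵀ * P + P * Abar + Cᵀ * Qbar * C + P * G * P) with hQd_def
      have hAYYA : Aᵀ * Y + Y * A = -Qd := by rw [hQd_def, neg_neg]; exact hYeq'
      have hptw : ∀ t : ℝ, (NormedSpace.exp (t • A) *ᵥ v) ⬝ᵥ ((Aᵀ * Y + Y * A) *ᵥ (NormedSpace.exp (t • A) *ᵥ v)) =
          -((NormedSpace.exp (t • A) *ᵥ v) ⬝ᵥ (Qd *ᵥ (NormedSpace.exp (t • A) *ᵥ v))) := by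
        intro t
        rw [hAYYA, Matrix.neg_mulVec, dotProduct_neg]
      have hpos : ∀ t : ℝ, 0 < (NormedSpace.exp (t • A) *ᵥ v) ⬝ᵥ (Qd *ᵥ (NormedSpace.exp (t • A) *ᵥ v)) := by
        intro t
        have := hLMI.dotProduct_mulVec_pos (hx_ne t)
        simpa [star_trivial] using this
      have hneg : IntegrableOn (fun t : ℝ => -((NormedSpace.exp (t • A) *ᵥ v) ⬝ᵥ
          ((Aᵀ * Y + Y * A) *ᵥ (NormedSpace.exp (t • A) *ᵥ v)))) (Set.Ioi (0:ℝ)) volume :=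
        hint.neg
      have hintQ : IntegrableOn (fun t : ℝ => (NormedSpace.exp (t • A) *ᵥ v) ⬝ᵥ (Qd *ᵥ (NormedSpace.exp (t • A) *ᵥ v))) (Set.Ioi (0:ℝ)) volume := by
        refine MeasureTheory.IntegrableOn.congr_fun hneg ?_ measurableSet_Ioi
        intro t _
        beta_reduce
        rw [hptw t, neg_neg]
      have h0 : 0 < ∫ t in Set.Ioi (0:ℝ), (NormedSpace.exp (t • A) *ᵥ v) ⬝ᵥ (Qd *ᵥ (NormedSpace.exp (t • A) *ᵥ v)) := by
        rw [MeasureTheory.setIntegral_pos_iff_support_of_nonneg_ae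
          (Filter.Eventually.of_forall fun t => (hpos t).le) hintQ]
        have hsupp : Function.support (fun t : ℝ => (NormedSpace.exp (t • A) *ᵥ v) ⬝ᵥ (Qd *ᵥ (NormedSpace.exp (t • A) *ᵥ v))) ∩ Set.Ioi (0:ℝ) =
            Set.Ioi (0:ℝ) := by
          apply Set.inter_eq_right.2
          intro t _
          exact Function.mem_support.2 (hpos t).ne'
        rw [hsupp, Real.volume_Ioi]
        exact ENNReal.zero_lt_top
      have hIQ : ∫ t in Set.Ioi (0:ℝ), (NormedSpace.exp (t • A) *ᵥ v) ⬝ᵥ (Qd *ᵥ (NormedSpace.exp (t • A) *ᵥ v)) = v ⬝ᵥ (Y *ᵥ v) := by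
        have h2 : ∫ t in Set.Ioi (0:ℝ), (NormedSpace.exp (t • A) *ᵥ v) ⬝ᵥ ((Aᵀ * Y + Y * A) *ᵥ (NormedSpace.exp (t • A) *ᵥ v)) =
            ∫ t in Set.Ioi (0:ℝ), -((NormedSpace.exp (t • A) *ᵥ v) ⬝ᵥ (Qd *ᵥ (NormedSpace.exp (t • A) *ᵥ v))) :=
          MeasureTheory.integral_congr_ae (Filter.Eventually.of_forall fun t => hptw t)
        rw [h2, MeasureTheory.integral_neg] at hI
        have := neg_injective hI
        simpa [star_trivial] using this
      rw [show star v = v from funext fun i => star_trivial (v i)]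
      rw [← hIQ]
      exact h0
  refine ⟨hYposdef, ?_, ?_⟩
  · -- Part 2: the value of the integral
    obtain ⟨hint2, hI2⟩ := integral_quad A (P - Y) hHur x₀
    beta_reduce
    have hmid : Cᵀ * Qbar * C - P * G * P = -(Aᵀ * (P - Y) + (P - Y) * A) := by
      have hAT : Aᵀ = Abarᵀ + P * G := by
        rw [hA_def, Matrix.transpose_add, Matrix.transpose_mul, hGs, hPs]
      have hexp : Aᵀ * (P - Y) + (P - Y) * A =
          Aᵀ * P + P * A - (Aᵀ * Y + Y * A) := by noncomm_ring
      rw [hexp, hYeq', hAT, hA_def]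
      noncomm_ring
    have hptw2 : ∀ t : ℝ,
        (C *ᵥ (NormedSpace.exp (t • A) *ᵥ x₀)) ⬝ᵥ (Qbar *ᵥ (C *ᵥ (NormedSpace.exp (t • A) *ᵥ x₀))) -
          ((D⁻¹ * Eᵀ * P) *ᵥ (NormedSpace.exp (t • A) *ᵥ x₀)) ⬝ᵥ (D *ᵥ ((D⁻¹ * Eᵀ * P) *ᵥ (NormedSpace.exp (t • A) *ᵥ x₀))) =
        -((NormedSpace.exp (t • A) *ᵥ x₀) ⬝ᵥ ((Aᵀ * (P - Y) + (P - Y) * A) *ᵥ (NormedSpace.exp (t • A) *ᵥ x₀))) := by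
      intro t
      have ha : (C *ᵥ (NormedSpace.exp (t • A) *ᵥ x₀)) ⬝ᵥ (Qbar *ᵥ (C *ᵥ (NormedSpace.exp (t • A) *ᵥ x₀))) =
          (NormedSpace.exp (t • A) *ᵥ x₀) ⬝ᵥ ((Cᵀ * Qbar * C) *ᵥ (NormedSpace.exp (t • A) *ᵥ x₀)) := by
        rw [dot_shift' C ((NormedSpace.exp (t • A) *ᵥ x₀)), Matrix.mulVec_mulVec, Matrix.mulVec_mulVec,
          Matrix.mul_assoc]
      have hb : ((D⁻¹ * Eᵀ * P) *ᵥ (NormedSpace.exp (t • A) *ᵥ x₀)) ⬝ᵥ (D *ᵥ ((D⁻¹ * Eᵀ * P) *ᵥ (NormedSpace.exp (t • A) *ᵥ x₀))) =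
          (NormedSpace.exp (t • A) *ᵥ x₀) ⬝ᵥ ((P * G * P) *ᵥ (NormedSpace.exp (t • A) *ᵥ x₀)) := by
        have hbmat : (D⁻¹ * Eᵀ * P)ᵀ * D * (D⁻¹ * Eᵀ * P) = P * G * P := by
          rw [Matrix.transpose_mul, Matrix.transpose_mul, Matrix.transpose_transpose,
            hDinv_s, hPs, hG_def]
          have h9 : ∀ Z : Matrix (Fin q) (Fin n) ℝ, D⁻¹ * (D * (D⁻¹ * Z)) = D⁻¹ * Z :=
            fun Z => by rw [← Matrix.mul_assoc, ← Matrix.mul_assoc, hDinvD]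
          simp only [Matrix.mul_assoc]
          rw [h9]
        rw [dot_shift' (D⁻¹ * Eᵀ * P) ((NormedSpace.exp (t • A) *ᵥ x₀)),
          Matrix.mulVec_mulVec, Matrix.mulVec_mulVec, hbmat]
      rw [ha, hb, ← dotProduct_sub, ← Matrix.sub_mulVec, hmid,
        Matrix.neg_mulVec, dotProduct_neg]
    have hcongr : ∫ t in Set.Ioi (0:ℝ),
        ((C *ᵥ (NormedSpace.exp (t • A) *ᵥ x₀)) ⬝ᵥ (Qbar *ᵥ (C *ᵥ (NormedSpace.exp (t • A) *ᵥ x₀))) -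
          ((D⁻¹ * Eᵀ * P) *ᵥ (NormedSpace.exp (t • A) *ᵥ x₀)) ⬝ᵥ (D *ᵥ ((D⁻¹ * Eᵀ * P) *ᵥ (NormedSpace.exp (t • A) *ᵥ x₀)))) =
        ∫ t in Set.Ioi (0:ℝ), -((NormedSpace.exp (t • A) *ᵥ x₀) ⬝ᵥ ((Aᵀ * (P - Y) + (P - Y) * A) *ᵥ (NormedSpace.exp (t • A) *ᵥ x₀))) :=
      MeasureTheory.integral_congr_ae (Filter.Eventually.of_forall fun t => hptw2 t)
    rw [hcongr, MeasureTheory.integral_neg, hI2, neg_neg, Matrix.sub_mulVec,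
      dotProduct_sub]
  · -- Part 3: strict bound
    rcases eq_or_ne x₀ 0 with rfl | hx0
    · simpa using hδ
    · have h1 : 0 < x₀ ⬝ᵥ (Y *ᵥ x₀) := by
        have := hYposdef.dotProduct_mulVec_pos hx0
        simpa [star_trivial] using this
      linarith
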